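/- The likelihood L attains its maximum over the simplex Δ at exactly one point; that is, there exists a unique p* ∈ Δ with L(p*) ≥ L(p) for all p ∈ Δ. -/

import Mathlib

open Finset

/-- The likelihood
`L(p) = ∏_j p_j^{ξ_j} (∑_{k=j}^h p_k / w_k)^{ζ_j}`
attains its maximum over the simplex `Δ` at exactly one point. -/
theorem stmt1 (h : ℕ) (hh : 1 ≤ h) (w : Fin h → ℝ) (hw : ∀ j, 0 < w j)
    (ξ ζ : Fin h → ℕ) (hξζ : ∀ j, 1 ≤ ξ j + ζ j)
    (m n : ℕ) (hm : m = ∑ j, ξ j) (hn : n = ∑ j, ζ j)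
    (L : (Fin h → ℝ) → ℝ)
    (hL : ∀ p, L p = ∏ j, p j ^ ξ j *
      (∑ k ∈ Finset.univ.filter (fun k => j ≤ k), p k / w k) ^ ζ j) :
    ∃! p : Fin h → ℝ,
      ((∀ j, 0 ≤ p j) ∧ ∑ j, p j = 1) ∧
        ∀ q : Fin h → ℝ, ((∀ j, 0 ≤ q j) ∧ ∑ j, q j = 1) → L q ≤ L p := by
  classical
  haveI : Nonempty (Fin h) := ⟨⟨0, hh⟩⟩
  set S : (Fin h → ℝ) → Fin h → ℝ :=
    fun p j => ∑ k ∈ Finset.univ.filter (fun k => j ≤ k), p k / w k with hSdef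
  have hLeq : ∀ p, L p = ∏ j, p j ^ ξ j * (S p j) ^ ζ j := hL
  have hSnn : ∀ p : Fin h → ℝ, (∀ j, 0 ≤ p j) → ∀ j, 0 ≤ S p j := by
    intro p hp j
    exact Finset.sum_nonneg fun k _ => div_nonneg (hp k) (hw k).le
  have hLnn : ∀ p : Fin h → ℝ, (∀ j, 0 ≤ p j) → 0 ≤ L p := by
    intro p hp
    rw [hLeq]
    exact Finset.prod_nonneg fun j _ =>
      mul_nonneg (pow_nonneg (hp j) _) (pow_nonneg (hSnn p hp j) _)
  have hhpos : (0:ℝ) < h := by exact_mod_cast hh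
  -- the uniform point
  set u : Fin h → ℝ := fun _ => (h : ℝ)⁻¹ with hu
  have huΔ : (∀ j, 0 ≤ u j) ∧ ∑ j, u j = 1 := by
    refine ⟨fun j => by positivity, ?_⟩
    simp only [hu, Finset.sum_const, Finset.card_univ, Fintype.card_fin, nsmul_eq_mul]
    field_simp
  have huL : 0 < L u := by
    rw [hLeq]
    apply Finset.prod_pos
    intro j _
    have h1 : 0 < u j := by simp only [hu]; positivity
    have h2 : 0 < S u j := by
      apply Finset.sum_pos
      · intro k _
        have hk : (0:ℝ) < u k := by simp only [hu]; positivity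
        exact div_pos hk (hw k)
      · exact ⟨j, by simp⟩
    exact mul_pos (pow_pos h1 _) (pow_pos h2 _)
  -- existence of a maximizer
  have hcomp : @IsCompact (Fin h → ℝ) _ {p | (∀ j, 0 ≤ p j) ∧ ∑ j, p j = 1} :=
    isCompact_stdSimplex ℝ (Fin h)
  have hcont : Continuous L := by
    have hfe : L = fun p : Fin h → ℝ => ∏ j, p j ^ ξ j *
        (∑ k ∈ Finset.univ.filter (fun k => j ≤ k), p k / w k) ^ ζ j := funext hL
    rw [hfe]; fun_prop
  obtain ⟨p, hpΔ, hpmax⟩ := hcomp.exists_isMaxOn ⟨u, huΔ⟩ hcont.continuousOn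
  have hpmax' : ∀ q : Fin h → ℝ, ((∀ j, 0 ≤ q j) ∧ ∑ j, q j = 1) → L q ≤ L p :=
    fun q hq => hpmax hq
  -- key uniqueness lemma
  have key : ∀ a b : Fin h → ℝ,
      ((∀ j, 0 ≤ a j) ∧ ∑ j, a j = 1) → ((∀ j, 0 ≤ b j) ∧ ∑ j, b j = 1) →
      (∀ q : Fin h → ℝ, ((∀ j, 0 ≤ q j) ∧ ∑ j, q j = 1) → L q ≤ L a) →
      (∀ q : Fin h → ℝ, ((∀ j, 0 ≤ q j) ∧ ∑ j, q j = 1) → L q ≤ L b) →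
      a = b := by
    intro a b haΔ hbΔ hamax hbmax
    have hab : L a = L b := le_antisymm (hbmax a haΔ) (hamax b hbΔ)
    have hMpos : 0 < L a := lt_of_lt_of_le huL (hamax u huΔ)
    have hMposb : 0 < L b := hab ▸ hMpos
    -- positivity of each factor at a maximizer
    have hfac : ∀ (c : Fin h → ℝ), (∀ j, 0 ≤ c j) → 0 < L c →
        ∀ j, 0 < c j ^ ξ j ∧ 0 < S c j ^ ζ j := by
      intro c hc hLc j
      have hnn : ∀ i, 0 ≤ c i ^ ξ i * S c i ^ ζ i := fun i =>
        mul_nonneg (pow_nonneg (hc i) _) (pow_nonneg (hSnn c hc i) _)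
      have hjpos : 0 < c j ^ ξ j * S c j ^ ζ j := by
        rcases lt_or_eq_of_le (hnn j) with hlt | heq
        · exact hlt
        · exfalso
          have hz : L c = 0 := by
            rw [hLeq]
            exact Finset.prod_eq_zero (Finset.mem_univ j) heq.symm
          linarith
      constructor
      · rcases lt_or_eq_of_le (pow_nonneg (hc j) (ξ j)) with hlt | heq
        · exact hlt
        · exfalso; rw [← heq, zero_mul] at hjpos; exact lt_irrefl _ hjpos
      · rcases lt_or_eq_of_le (pow_nonneg (hSnn c hc j) (ζ j)) with hlt | heq
        · exact hlt
        · exfalso; rw [← heq, mul_zero] at hjpos; exact lt_irrefl _ hjpos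
    have hfa := hfac a haΔ.1 hMpos
    have hfb := hfac b hbΔ.1 hMposb
    -- the midpoint
    set r : Fin h → ℝ := fun j => (a j + b j) / 2 with hr
    have hrΔ : (∀ j, 0 ≤ r j) ∧ ∑ j, r j = 1 := by
      constructor
      · intro j
        have h1 := haΔ.1 j; have h2 := hbΔ.1 j
        simp only [hr]; linarith
      · simp only [hr]
        rw [← Finset.sum_div, Finset.sum_add_distrib, haΔ.2, hbΔ.2]
        norm_num
    have hSr : ∀ j, S r j = (S a j + S b j) / 2 := by
      intro j
      simp only [hSdef, hr]
      rw [← Finset.sum_add_distrib, Finset.sum_div]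
      exact Finset.sum_congr rfl fun k _ => by ring
    -- normalized factor expressions
    have e1 : ∀ j, (a j ^ ξ j * S a j ^ ζ j) * (b j ^ ξ j * S b j ^ ζ j)
        = (a j * b j) ^ ξ j * (S a j * S b j) ^ ζ j := by
      intro j; rw [mul_pow, mul_pow]; ring
    have e2 : ∀ j, (r j ^ ξ j * S r j ^ ζ j) ^ 2
        = (r j ^ 2) ^ ξ j * (S r j ^ 2) ^ ζ j := by
      intro j; rw [mul_pow, ← pow_mul, ← pow_mul, mul_comm (ξ j) 2, mul_comm (ζ j) 2,
        pow_mul, pow_mul]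
    -- coordinatewise AM-GM facts
    have g1 : ∀ j, a j * b j ≤ r j ^ 2 := by
      intro j; simp only [hr]; nlinarith [sq_nonneg (a j - b j)]
    have g2 : ∀ j, S a j * S b j ≤ S r j ^ 2 := by
      intro j; rw [hSr]; nlinarith [sq_nonneg (S a j - S b j)]
    have nn1 : ∀ j, 0 ≤ a j * b j := fun j => mul_nonneg (haΔ.1 j) (hbΔ.1 j)
    have nn2 : ∀ j, 0 ≤ S a j * S b j :=
      fun j => mul_nonneg (hSnn a haΔ.1 j) (hSnn b hbΔ.1 j)
    have hterm : ∀ j, (a j ^ ξ j * S a j ^ ζ j) * (b j ^ ξ j * S b j ^ ζ j)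
        ≤ (r j ^ ξ j * S r j ^ ζ j) ^ 2 := by
      intro j
      rw [e1, e2]
      exact mul_le_mul (pow_le_pow_left₀ (nn1 j) (g1 j) _)
        (pow_le_pow_left₀ (nn2 j) (g2 j) _)
        (pow_nonneg (nn2 j) _) (pow_nonneg (le_trans (nn1 j) (g1 j)) _)
    -- product identities
    have hprodL : ∏ j, (a j ^ ξ j * S a j ^ ζ j) * (b j ^ ξ j * S b j ^ ζ j)
        = L a * L b := by
      rw [Finset.prod_mul_distrib, ← hLeq, ← hLeq]
    have hprodR : ∏ j, (r j ^ ξ j * S r j ^ ζ j) ^ 2 = L r ^ 2 := by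
      rw [Finset.prod_pow, ← hLeq]
    -- squeeze: equality of products
    have hLrle : L r ≤ L a := hamax r hrΔ
    have hLrnn : 0 ≤ L r := hLnn r hrΔ.1
    have hsq : L r ^ 2 ≤ L a * L b := by
      rw [← hab]
      calc L r ^ 2 = L r * L r := sq (L r)
        _ ≤ L a * L a := mul_le_mul hLrle hLrle hLrnn (le_trans hLrnn hLrle)
    have hfpos : ∀ i, 0 < (a i ^ ξ i * S a i ^ ζ i) * (b i ^ ξ i * S b i ^ ζ i) :=
      fun i => mul_pos (mul_pos (hfa i).1 (hfa i).2) (mul_pos (hfb i).1 (hfb i).2)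
    have hprodeq : ∏ j, (a j ^ ξ j * S a j ^ ζ j) * (b j ^ ξ j * S b j ^ ζ j)
        = ∏ j, (r j ^ ξ j * S r j ^ ζ j) ^ 2 := by
      have h1 : ∏ j, (a j ^ ξ j * S a j ^ ζ j) * (b j ^ ξ j * S b j ^ ζ j)
          ≤ ∏ j, (r j ^ ξ j * S r j ^ ζ j) ^ 2 :=
        Finset.prod_le_prod (fun j _ => (hfpos j).le) (fun j _ => hterm j)
      have h2 : ∏ j, (r j ^ ξ j * S r j ^ ζ j) ^ 2
          ≤ ∏ j, (a j ^ ξ j * S a j ^ ζ j) * (b j ^ ξ j * S b j ^ ζ j) := by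
        rw [hprodL, hprodR]; exact hsq
      linarith
    -- termwise equality
    have htermeq : ∀ j, (a j * b j) ^ ξ j * (S a j * S b j) ^ ζ j
        = (r j ^ 2) ^ ξ j * (S r j ^ 2) ^ ζ j := by
      intro j
      rw [← e1, ← e2]
      by_contra hne
      have hlt : (a j ^ ξ j * S a j ^ ζ j) * (b j ^ ξ j * S b j ^ ζ j)
          < (r j ^ ξ j * S r j ^ ζ j) ^ 2 := lt_of_le_of_ne (hterm j) hne
      have hplt : ∏ i, (a i ^ ξ i * S a i ^ ζ i) * (b i ^ ξ i * S b i ^ ζ i)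
          < ∏ i, (r i ^ ξ i * S r i ^ ζ i) ^ 2 :=
        Finset.prod_lt_prod (fun i _ => hfpos i) (fun i _ => hterm i)
          ⟨j, Finset.mem_univ j, hlt⟩
      rw [hprodeq] at hplt
      exact lt_irrefl _ hplt
    -- coordinate conclusions
    have hxi : ∀ j, 1 ≤ ξ j → a j = b j := by
      intro j hj
      by_contra hne
      have hd : a j - b j ≠ 0 := sub_ne_zero.mpr hne
      have hdd : 0 < (a j - b j) ^ 2 := sq_pos_of_ne_zero hd
      have s1 : a j * b j < r j ^ 2 := by
        simp only [hr]; nlinarith [hdd]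
      have s2 : (a j * b j) ^ ξ j < (r j ^ 2) ^ ξ j :=
        pow_lt_pow_left₀ s1 (nn1 j) (by omega)
      have pos2 : 0 < (S a j * S b j) ^ ζ j := by
        rw [mul_pow]; exact mul_pos (hfa j).2 (hfb j).2
      have : (a j * b j) ^ ξ j * (S a j * S b j) ^ ζ j
          < (r j ^ 2) ^ ξ j * (S r j ^ 2) ^ ζ j :=
        mul_lt_mul s2 (pow_le_pow_left₀ (nn2 j) (g2 j) _) pos2
          (pow_nonneg (by nlinarith [nn1 j] : (0:ℝ) ≤ r j ^ 2) _)
      rw [htermeq j] at this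
      exact lt_irrefl _ this
    have hzeta : ∀ j, 1 ≤ ζ j → S a j = S b j := by
      intro j hj
      by_contra hne
      have hd : S a j - S b j ≠ 0 := sub_ne_zero.mpr hne
      have hdd : 0 < (S a j - S b j) ^ 2 := sq_pos_of_ne_zero hd
      have s1 : S a j * S b j < S r j ^ 2 := by
        rw [hSr]; nlinarith [hdd]
      have s2 : (S a j * S b j) ^ ζ j < (S r j ^ 2) ^ ζ j :=
        pow_lt_pow_left₀ s1 (nn2 j) (by omega)
      have pos1 : 0 < (a j * b j) ^ ξ j := by
        rw [mul_pow]; exact mul_pos (hfa j).1 (hfb j).1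
      have hr2pos : 0 < (r j ^ 2) ^ ξ j :=
        lt_of_lt_of_le pos1 (pow_le_pow_left₀ (nn1 j) (g1 j) _)
      have : (a j * b j) ^ ξ j * (S a j * S b j) ^ ζ j
          < (r j ^ 2) ^ ξ j * (S r j ^ 2) ^ ζ j :=
        mul_lt_mul' (pow_le_pow_left₀ (nn1 j) (g1 j) _) s2
          (pow_nonneg (nn2 j) _) hr2pos
      rw [htermeq j] at this
      exact lt_irrefl _ this
    -- downward induction
    have hco : ∀ j : Fin h, (∀ k, j < k → a k = b k) → a j = b j := by
      intro j ih
      rcases Nat.lt_or_ge 0 (ξ j) with hx | hx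
      · exact hxi j hx
      · have hz : 1 ≤ ζ j := by have := hξζ j; omega
        have hSab := hzeta j hz
        have hsum : ∑ k ∈ Finset.univ.filter (fun k => j ≤ k), (a k - b k) / w k
            = (a j - b j) / w j := by
          apply Finset.sum_eq_single_of_mem j (by simp)
          intro k hk hkj
          have hjk : j ≤ k := by simpa using (Finset.mem_filter.mp hk).2
          have hjlt : j < k := lt_of_le_of_ne hjk (Ne.symm hkj)
          rw [ih k hjlt, sub_self, zero_div]
        have hdiff : S a j - S b j = (a j - b j) / w j := by
          rw [← hsum]
          simp only [hSdef]
          rw [← Finset.sum_sub_distrib]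
          apply Finset.sum_congr rfl
          intro k _
          ring
        have h0 : (a j - b j) / w j = 0 := by rw [← hdiff, hSab, sub_self]
        rcases div_eq_zero_iff.mp h0 with h1 | h2
        · linarith [h1]
        · exact absurd h2 (ne_of_gt (hw j))
    have hall : ∀ d : ℕ, ∀ j : Fin h, h - j.val ≤ d → a j = b j := by
      intro d
      induction d with
      | zero => intro j hj; exact absurd hj (by have := j.isLt; omega)
      | succ d ih =>
        intro j hj
        apply hco
        intro k hk
        apply ih
        have hkl := k.isLt
        have hk' : j.val < k.val := hk
        omega
    funext j
    exact hall h j (by omega)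
  exact ⟨p, ⟨hpΔ, hpmax'⟩, fun q hq => key q p hq.1 hpΔ hq.2 hpmax'⟩
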